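/- Let Δ = {x ∈ ℝ² : ⟨x, v_i⟩ ≥ −1 for i = 1,…,4} with v₁ = (1,0), v₂ = (1,1), v₃ = (0,1), v₄ = (−1,−1), and let b = (1/vol(Δ))·∫_Δ x dx be its barycenter. Then min_{1 ≤ i ≤ 4} 1/(⟨b, v_i⟩ + 1) = 6/7. -/

import Mathlib

open MeasureTheory

/-- The facet normals of the reflexive Delzant polytope of the blow-up of `P²` at a point. -/
def blowupP2Normals : Fin 4 → Fin 2 → ℝ :=
  ![![1, 0], ![1, 1], ![0, 1], ![-1, -1]]

noncomputable section AuxDelta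
open Set

def S : Set (ℝ × ℝ) := {p | -1 ≤ p.1 ∧ -1 ≤ p.2 ∧ -1 ≤ p.1 + p.2 ∧ p.1 + p.2 ≤ 1}

lemma hS_meas : MeasurableSet S :=
  (measurableSet_le measurable_const measurable_fst).inter
    ((measurableSet_le measurable_const measurable_snd).inter
      ((measurableSet_le measurable_const (measurable_fst.add measurable_snd)).inter
        (measurableSet_le (measurable_fst.add measurable_snd) measurable_const)))

lemma hS_sub : S ⊆ Set.Icc ((-1 : ℝ), (-1 : ℝ)) (2, 2) := by
  rintro ⟨x, y⟩ ⟨h1, h2, h3, h4⟩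
  simp only [Set.mem_Icc, Prod.mk_le_mk]
  exact ⟨⟨h1, h2⟩, by constructor <;> linarith⟩

lemma fubini_S (f : ℝ × ℝ → ℝ) (hf : Continuous f) :
    ∫ p in S, f p = (∫ x in (-1:ℝ)..0, ∫ y in (-1-x)..(1-x), f (x, y))
      + ∫ x in (0:ℝ)..2, ∫ y in (-1:ℝ)..(1-x), f (x, y) := by
  have hint0 : Integrable (S.indicator f) volume :=
    ((hf.continuousOn.integrableOn_compact isCompact_Icc).mono_set hS_sub).integrable_indicator
      hS_meas
  have hint : Integrable (S.indicator f) ((volume : Measure ℝ).prod volume) := by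
    rwa [Measure.volume_eq_prod] at hint0
  set F : ℝ → ℝ := fun x => ∫ y, S.indicator f (x, y) with hF
  have hFint : Integrable F := hint.integral_prod_left
  have hF_eq : ∀ x ∈ Set.Icc (-1:ℝ) 2,
      F x = ∫ y in (max (-1) (-1-x))..(1-x), f (x, y) := by
    intro x hx
    have hmem : ∀ y : ℝ, ((x, y) ∈ S) ↔ y ∈ Set.Icc (max (-1:ℝ) (-1-x)) (1-x) := by
      intro y
      simp only [S, Set.mem_setOf_eq, Set.mem_Icc, max_le_iff]
      constructor
      · rintro ⟨h1, h2, h3, h4⟩; exact ⟨⟨h2, by linarith⟩, by linarith⟩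
      · rintro ⟨⟨h1, h2⟩, h3⟩; exact ⟨hx.1, h1, by linarith, by linarith⟩
    have hle : max (-1:ℝ) (-1-x) ≤ 1 - x :=
      max_le (by linarith [hx.2]) (by linarith [hx.1])
    calc F x = ∫ y, (Set.Icc (max (-1:ℝ) (-1-x)) (1-x)).indicator (fun y => f (x, y)) y := by
          simp only [hF]
          congr 1
          funext y
          by_cases h : (x, y) ∈ S
          · rw [Set.indicator_of_mem h, Set.indicator_of_mem ((hmem y).1 h)]
          · rw [Set.indicator_of_notMem h,
              Set.indicator_of_notMem (fun hy => h ((hmem y).2 hy))]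
      _ = ∫ y in Set.Icc (max (-1:ℝ) (-1-x)) (1-x), f (x, y) :=
          integral_indicator measurableSet_Icc
      _ = ∫ y in (max (-1) (-1-x))..(1-x), f (x, y) := by
          rw [intervalIntegral.integral_of_le hle, integral_Icc_eq_integral_Ioc]
  have hF0 : ∀ x ∉ Set.Icc (-1:ℝ) 2, F x = 0 := by
    intro x hx
    have : ∀ y : ℝ, S.indicator f (x, y) = 0 := by
      intro y
      apply Set.indicator_of_notMem
      rintro ⟨h1, h2, h3, h4⟩
      simp only [Set.mem_Icc, not_and, not_le] at hx
      have := hx h1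
      linarith
    simp only [hF, this, integral_zero]
  have hsplit : IntervalIntegrable F volume (-1) 0 ∧ IntervalIntegrable F volume 0 2 :=
    ⟨hFint.intervalIntegrable, hFint.intervalIntegrable⟩
  calc ∫ p in S, f p = ∫ p, S.indicator f p := (integral_indicator hS_meas).symm
    _ = ∫ x, F x := by rw [Measure.volume_eq_prod]; exact integral_prod _ hint
    _ = ∫ x in Set.Icc (-1:ℝ) 2, F x :=
        (setIntegral_eq_integral_of_forall_compl_eq_zero hF0).symm
    _ = ∫ x in (-1:ℝ)..2, F x := by
        rw [intervalIntegral.integral_of_le (by norm_num), integral_Icc_eq_integral_Ioc]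
    _ = (∫ x in (-1:ℝ)..0, F x) + ∫ x in (0:ℝ)..2, F x :=
        (intervalIntegral.integral_add_adjacent_intervals hsplit.1 hsplit.2).symm
    _ = _ := by
        congr 1
        · apply intervalIntegral.integral_congr
          intro x hx
          rw [Set.uIcc_of_le (by norm_num : (-1:ℝ) ≤ 0)] at hx
          rw [hF_eq x ⟨hx.1, by linarith [hx.2]⟩, max_eq_right (by linarith [hx.2])]
        · apply intervalIntegral.integral_congr
          intro x hx
          rw [Set.uIcc_of_le (by norm_num : (0:ℝ) ≤ 2)] at hx
          rw [hF_eq x ⟨by linarith [hx.1], hx.2⟩, max_eq_left (by linarith [hx.1])]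

lemma poly_int (a b c d e : ℝ) : ∫ x in a..b, (c + d * x + e * x ^ 2) =
    c * (b - a) + d * (b ^ 2 - a ^ 2) / 2 + e * (b ^ 3 - a ^ 3) / 3 := by
  have h1 : IntervalIntegrable (fun x : ℝ => c) volume a b := intervalIntegrable_const
  have h2 : IntervalIntegrable (fun x : ℝ => d * x) volume a b :=
    (continuous_const.mul continuous_id).intervalIntegrable a b
  have h3 : IntervalIntegrable (fun x : ℝ => e * x ^ 2) volume a b :=
    (continuous_const.mul (continuous_pow 2)).intervalIntegrable a b
  rw [intervalIntegral.integral_add (h1.add h2) h3, intervalIntegral.integral_add h1 h2,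
    intervalIntegral.integral_const, intervalIntegral.integral_const_mul,
    intervalIntegral.integral_const_mul, integral_id,
    integral_pow]
  push_cast
  simp only [smul_eq_mul]
  ring

lemma hS_one : ∫ p in S, (1 : ℝ) = 4 := by
  rw [fubini_S _ continuous_const]
  have e1 : (∫ x in (-1:ℝ)..0, ∫ y in (-1-x)..(1-x), (1:ℝ)) = 2 := by
    simp only [intervalIntegral.integral_const, smul_eq_mul, mul_one]
    rw [intervalIntegral.integral_congr
      (g := fun x : ℝ => 2 + 0 * x + 0 * x ^ 2) (fun x _ => by ring), poly_int]
    norm_num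
  have e2 : (∫ x in (0:ℝ)..2, ∫ y in (-1:ℝ)..(1-x), (1:ℝ)) = 2 := by
    simp only [intervalIntegral.integral_const, smul_eq_mul, mul_one]
    rw [intervalIntegral.integral_congr
      (g := fun x : ℝ => 2 + (-1) * x + 0 * x ^ 2) (fun x _ => by ring), poly_int]
    norm_num
  rw [e1, e2]; norm_num

lemma hS_fst : ∫ p in S, p.1 = 1/3 := by
  rw [fubini_S _ continuous_fst]
  have e1 : (∫ x in (-1:ℝ)..0, ∫ y in (-1-x)..(1-x), x) = -1 := by
    simp only [intervalIntegral.integral_const, smul_eq_mul]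
    rw [intervalIntegral.integral_congr
      (g := fun x : ℝ => 0 + 2 * x + 0 * x ^ 2) (fun x _ => by ring), poly_int]
    norm_num
  have e2 : (∫ x in (0:ℝ)..2, ∫ y in (-1:ℝ)..(1-x), x) = 4/3 := by
    simp only [intervalIntegral.integral_const, smul_eq_mul]
    rw [intervalIntegral.integral_congr
      (g := fun x : ℝ => 0 + 2 * x + (-1) * x ^ 2) (fun x _ => by ring), poly_int]
    norm_num
  rw [e1, e2]; norm_num

lemma hS_snd : ∫ p in S, p.2 = 1/3 := by
  rw [fubini_S _ continuous_snd]
  have e1 : (∫ x in (-1:ℝ)..0, ∫ y in (-1-x)..(1-x), y) = 1 := by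
    simp only [integral_id]
    rw [intervalIntegral.integral_congr
      (g := fun x : ℝ => 0 + (-2) * x + 0 * x ^ 2) (fun x _ => by ring), poly_int]
    norm_num
  have e2 : (∫ x in (0:ℝ)..2, ∫ y in (-1:ℝ)..(1-x), y) = -2/3 := by
    simp only [integral_id]
    rw [intervalIntegral.integral_congr
      (g := fun x : ℝ => 0 + (-1) * x + (1/2) * x ^ 2) (fun x _ => by ring), poly_int]
    norm_num
  rw [e1, e2]; norm_num



lemma finTwoArrow_apply (x : Fin 2 → ℝ) :
    (MeasurableEquiv.finTwoArrow x : ℝ × ℝ) = (x 0, x 1) := rfl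


/-- Blum–Jonsson formula computation for `X = P(O_{P²} ⊕ O_{P²}(-1))`: with `b` the barycenter
of `Δ = {x : ⟨x, vᵢ⟩ ≥ -1, i = 1,…,4}`, one has `δ(X) = min_i 1/(⟨b, vᵢ⟩ + 1) = 6/7`. -/
theorem delta_invariant_blowup_P2
    (Δ : Set (Fin 2 → ℝ))
    (hΔ : Δ = {x : Fin 2 → ℝ | ∀ i : Fin 4, -1 ≤ ∑ j, x j * blowupP2Normals i j})
    (b : Fin 2 → ℝ) (hb : b = (volume Δ).toReal⁻¹ • ∫ x in Δ, x) :
    (⨅ i : Fin 4, 1 / ((∑ j, b j * blowupP2Normals i j) + 1)) = 6 / 7 := by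
  have hΔS : Δ = MeasurableEquiv.finTwoArrow ⁻¹' S := by
    rw [hΔ]; ext x
    simp only [Set.mem_setOf_eq, Set.mem_preimage, finTwoArrow_apply]
    constructor
    · intro h
      have h0 := h 0; have h1 := h 1; have h2 := h 2; have h3 := h 3
      simp [blowupP2Normals, Fin.sum_univ_two] at h0 h1 h2 h3
      exact ⟨h0, h2, by linarith, by linarith⟩
    · rintro ⟨h1, h2, h3, h4⟩ i
      fin_cases i <;> simp [blowupP2Normals, Fin.sum_univ_two] <;> linarith
  have hvol : (volume Δ).toReal = 4 := by
    rw [hΔS, (volume_preserving_finTwoArrow ℝ).measure_preimage hS_meas.nullMeasurableSet]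
    have h := setIntegral_const (μ := (volume : Measure (ℝ × ℝ))) (s := S) (1 : ℝ)
    rw [hS_one, smul_eq_mul, mul_one] at h
    exact h.symm
  have hIntOn : IntegrableOn (fun x : Fin 2 → ℝ => x) Δ := by
    have hsub : Δ ⊆ Set.Icc (fun _ => (-1:ℝ)) (fun _ => 2) := by
      intro x hx; rw [hΔ] at hx
      have h0 := hx 0; have h2 := hx 2; have h3 := hx 3
      simp [blowupP2Normals, Fin.sum_univ_two] at h0 h2 h3
      constructor <;> intro i <;> fin_cases i <;> simp <;> linarith
    exact (continuous_id.continuousOn.integrableOn_compact isCompact_Icc).mono_set hsub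
  have heval : ∀ j : Fin 2, (∫ x in Δ, x) j = ∫ x in Δ, x j := fun j =>
    ((ContinuousLinearMap.proj (R := ℝ) (φ := fun _ : Fin 2 => ℝ) j).integral_comp_comm
      hIntOn).symm
  have h0 : ∫ x in Δ, x 0 = 1/3 := by
    rw [hΔS]
    exact ((volume_preserving_finTwoArrow ℝ).setIntegral_preimage_emb
      (MeasurableEquiv.measurableEmbedding _) (fun p => p.1) S).trans hS_fst
  have h1 : ∫ x in Δ, x 1 = 1/3 := by
    rw [hΔS]
    exact ((volume_preserving_finTwoArrow ℝ).setIntegral_preimage_emb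
      (MeasurableEquiv.measurableEmbedding _) (fun p => p.2) S).trans hS_snd
  have hb0 : b 0 = 1/12 := by
    rw [hb, Pi.smul_apply, smul_eq_mul, heval 0, h0, hvol]; norm_num
  have hb1 : b 1 = 1/12 := by
    rw [hb, Pi.smul_apply, smul_eq_mul, heval 1, h1, hvol]; norm_num
  have hf : ∀ i : Fin 4, 1 / ((∑ j, b j * blowupP2Normals i j) + 1)
      = ![12/13, 6/7, 12/13, 6/5] i := by
    intro i
    fin_cases i <;> norm_num [Fin.sum_univ_two, blowupP2Normals, hb0, hb1]
  have hbdd : BddBelow (Set.range fun i : Fin 4 =>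
      1 / ((∑ j, b j * blowupP2Normals i j) + 1)) :=
    (Set.finite_range _).bddBelow
  apply le_antisymm
  · calc (⨅ i : Fin 4, 1 / ((∑ j, b j * blowupP2Normals i j) + 1))
        ≤ 1 / ((∑ j, b j * blowupP2Normals 1 j) + 1) := ciInf_le hbdd 1
      _ = 6 / 7 := by rw [hf 1]; norm_num
  · apply le_ciInf
    intro i
    rw [hf i]
    fin_cases i <;> norm_num

end AuxDelta
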